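/- (Theorem 2.2(v), stable sign) There exist K ∈ ℕ and a sign vector s ∈ {−1, 0, +1}ⁿ such that sign(x_i^k) = s_i for every i ∈ {1,…,n} and every k > K. -/

import Mathlib

open Filter
open scoped BigOperators InnerProductSpace
open Topology

noncomputable section

/-- Real n-dimensional Euclidean space. -/
abbrev Vec (n : ℕ) := EuclideanSpace ℝ (Fin n)

/-- The smoothed objective `F(x, ε) = f(x) + λ ∑ᵢ (|xᵢ| + εᵢ)^p`. -/
def Fobj (n : ℕ) (p lam : ℝ) (f : Vec n → ℝ) (z : Vec n) (ε : Fin n → ℝ) : ℝ :=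
  f z + lam * ∑ i, (|z i| + ε i) ^ p

/-- The merit function `ψ(x, y, ε) = F(x, ε) + (β/2)‖x − y‖²`. -/
def psiObj (n : ℕ) (p lam β : ℝ) (f : Vec n → ℝ) (z y : Vec n) (ε : Fin n → ℝ) : ℝ :=
  Fobj n p lam f z ε + β / 2 * ‖z - y‖ ^ 2

/-- The weighted-ℓ₁ subproblem objective at iteration `k`:
`⟨∇f(yₖ), z⟩ + (β/2)‖z − yₖ‖² + λ ∑ᵢ wᵢᵏ |zᵢ|` with `wᵢᵏ = p(|xᵢᵏ| + εᵢᵏ)^{p−1}`. -/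
def subObj (n : ℕ) (p lam β : ℝ) (f : Vec n → ℝ) (xk yk : Vec n) (εk : Fin n → ℝ)
    (z : Vec n) : ℝ :=
  ⟪gradient f yk, z⟫_ℝ + β / 2 * ‖z - yk‖ ^ 2
    + lam * ∑ i, (p * (|xk i| + εk i) ^ (p - 1)) * |z i|

/-- All the hypotheses of the EIRL1 algorithm (Algorithm 1) together with
Assumption 2.1.  The convention `x⁻¹ = x⁰` is encoded through truncated
subtraction on ℕ (`x (k-1) = x 0` for `k = 0`). -/
structure EIRL1 (n : ℕ) (p lam β Lf μ αbar : ℝ) (f : Vec n → ℝ)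
    (x y : ℕ → Vec n) (ε : ℕ → Fin n → ℝ) (α : ℕ → ℝ) : Prop where
  hn : 1 ≤ n
  hp0 : 0 < p
  hp1 : p < 1
  hlam : 0 < lam
  hμ0 : 0 < μ
  hμ1 : μ < 1
  hLf : 0 ≤ Lf
  hβ : Lf < β
  hconv : ConvexOn ℝ Set.univ f
  hdiff : ContDiff ℝ 1 f
  hlip : ∀ a b, ‖gradient f a - gradient f b‖ ≤ Lf * ‖a - b‖
  hαbar0 : 0 ≤ αbar
  hαbar1 : αbar < 1
  hα0 : ∀ k, 0 ≤ α k
  hα1 : ∀ k, α k ≤ αbar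
  hε0 : ∀ i, 0 < ε 0 i
  hεpos : ∀ k i, 0 < ε (k + 1) i
  hεdec : ∀ k i, ε (k + 1) i ≤ μ * ε k i
  hy : ∀ k, y k = x k + α k • (x k - x (k - 1))
  hmin : ∀ k z, z ≠ x (k + 1) →
    subObj n p lam β f (x k) (y k) (ε k) (x (k + 1)) < subObj n p lam β f (x k) (y k) (ε k) z
  hlevel : Bornology.IsBounded {z : Vec n | Fobj n p lam f z 0 ≤ Fobj n p lam f (x 0) (ε 0)}





lemma eirl_sq_norm {n : ℕ} (z : Vec n) : ‖z‖ ^ 2 = ∑ i, (z i) ^ 2 := by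
  rw [EuclideanSpace.norm_eq, Real.sq_sqrt (by positivity)]
  simp [Real.norm_eq_abs, sq_abs]

lemma eirl_inner {n : ℕ} (a b : Vec n) : ⟪a, b⟫_ℝ = ∑ i, a i * b i := by
  simp [PiLp.inner_apply, RCLike.inner_apply, conj_trivial, mul_comm]

lemma eirl_abs_coord_le {n : ℕ} (z : Vec n) (i : Fin n) : |z i| ≤ ‖z‖ := by
  have h1 : (z i) ^ 2 ≤ ∑ j, (z j) ^ 2 :=
    Finset.single_le_sum (fun j _ => sq_nonneg (z j)) (Finset.mem_univ i)
  have := Real.sqrt_le_sqrt h1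
  rwa [Real.sqrt_sq_eq_abs, ← eirl_sq_norm, Real.sqrt_sq (norm_nonneg z)] at this

lemma eirl_onedim {β c γ yv a : ℝ} (hβ : 0 < β) (hc : 0 ≤ c)
    (hmin : ∀ t, γ * a + β / 2 * (a - yv) ^ 2 + c * |a| ≤
      γ * t + β / 2 * (t - yv) ^ 2 + c * |t|) :
    (∀ t, γ * a + β / 2 * (a - yv) ^ 2 + c * |a| + β / 2 * (t - a) ^ 2 ≤
      γ * t + β / 2 * (t - yv) ^ 2 + c * |t|) ∧
    (a ≠ 0 → c = |γ + β * (a - yv)|) := by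
  have hderiv : ∀ s : ℝ, HasDerivAt (fun t : ℝ => |t|) s a →
      γ + β * (a - yv) + c * s = 0 := by
    intro s habs
    have hq : HasDerivAt (fun t => γ * t + β / 2 * (t - yv) ^ 2 + c * |t|)
        (γ + β / 2 * (2 * (a - yv)) + c * s) a := by
      have h1 : HasDerivAt (fun t : ℝ => γ * t) γ a := by
        simpa using (hasDerivAt_id a).const_mul γ
      have h2 : HasDerivAt (fun t : ℝ => β / 2 * (t - yv) ^ 2)
          (β / 2 * (2 * (a - yv))) a := by
        have : HasDerivAt (fun t : ℝ => (t - yv) ^ 2) (2 * (a - yv)) a := by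
          simpa using ((hasDerivAt_id a).sub_const yv).fun_pow 2
        simpa using this.const_mul (β / 2)
      exact (h1.add h2).add (habs.const_mul c)
    have hloc : IsLocalMin (fun t => γ * t + β / 2 * (t - yv) ^ 2 + c * |t|) a :=
      Filter.Eventually.of_forall hmin
    have hzero := hloc.hasDerivAt_eq_zero hq
    nlinarith [hzero]
  have hsneg : a < 0 → γ + β * (a - yv) = c := by
    intro hlt
    have := hderiv (-1) (hasDerivAt_abs_neg hlt)
    linarith
  have hspos : 0 < a → γ + β * (a - yv) = -c := by
    intro hgt
    have := hderiv 1 (hasDerivAt_abs_pos hgt)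
    linarith
  have hB : ∀ t, 0 ≤ (γ + β * (a - yv)) * (t - a) + c * (|t| - |a|) := by
    intro t
    rcases lt_trichotomy a 0 with hlt | ha | hgt
    · have h := hsneg hlt
      have h2 : (γ + β * (a - yv)) * (t - a) + c * (|t| - |a|) = c * (|t| + t) := by
        rw [h, abs_of_neg hlt]; ring
      rw [h2]
      exact mul_nonneg hc (by linarith [neg_abs_le t])
    · subst ha
      by_contra hneg
      push_neg at hneg
      simp only [sub_zero, abs_zero] at hneg
      have ht : t ≠ 0 := by
        rintro rfl; simp at hneg
      have ht2 : 0 < β * t ^ 2 := by positivity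
      have hX : (γ + β * (0 - yv)) * t + c * (|t| - 0) < 0 := by linarith
      set X : ℝ := (γ + β * (0 - yv)) * t + c * (|t| - 0) with hXdef
      set δ : ℝ := min 1 (-X / (β * t ^ 2)) with hδdef
      have hδpos : 0 < δ := lt_min one_pos (div_pos (by linarith) ht2)
      have hkey := hmin (δ * t)
      simp only [mul_zero, zero_sub, abs_zero, mul_zero, add_zero] at hkey
      have hid : γ * (δ * t) + β / 2 * (δ * t - yv) ^ 2 + c * |δ * t|
          - (γ * 0 + β / 2 * (0 - yv) ^ 2 + c * |0|)
          = δ * (X + β / 2 * δ * t ^ 2) := by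
        rw [abs_mul, abs_of_pos hδpos, hXdef]; simp; ring
      have h1 : 0 ≤ δ * (X + β / 2 * δ * t ^ 2) := by
        rw [← hid]; linarith [hmin (δ * t)]
      have h2 : 0 ≤ X + β / 2 * δ * t ^ 2 := by
        by_contra hn
        push_neg at hn
        exact absurd h1 (not_le.mpr (mul_neg_of_pos_of_neg hδpos hn))
      have h4 : δ * (β * t ^ 2) ≤ (-X / (β * t ^ 2)) * (β * t ^ 2) :=
        mul_le_mul_of_nonneg_right (min_le_right _ _) ht2.le
      rw [div_mul_cancel₀ _ (ne_of_gt ht2)] at h4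
      have hY : β / 2 * δ * t ^ 2 = δ * (β * t ^ 2) / 2 := by ring
      rw [hY] at h2
      linarith
    · have h := hspos hgt
      have h2 : (γ + β * (a - yv)) * (t - a) + c * (|t| - |a|) = c * (|t| - t) := by
        rw [h, abs_of_pos hgt]; ring
      rw [h2]
      exact mul_nonneg hc (by linarith [le_abs_self t])
  constructor
  · intro t
    have hq : γ * t + β / 2 * (t - yv) ^ 2 + c * |t|
        - (γ * a + β / 2 * (a - yv) ^ 2 + c * |a|)
        = (γ + β * (a - yv)) * (t - a) + β / 2 * (t - a) ^ 2 + c * (|t| - |a|) := by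
      ring
    linarith [hB t]
  · intro ha
    rcases lt_trichotomy a 0 with hlt | h0 | hgt
    · rw [hsneg hlt, abs_of_nonneg hc]
    · exact absurd h0 ha
    · rw [hspos hgt, abs_neg, abs_of_nonneg hc]


/-- Directional derivative along a line via the gradient. -/
lemma eirl_line_deriv {n : ℕ} (f : Vec n → ℝ) (hdiff : ContDiff ℝ 1 f)
    (a v : Vec n) (t : ℝ) :
    HasDerivAt (fun s : ℝ => f (a + s • v)) ⟪gradient f (a + t • v), v⟫_ℝ t := by
  have hf : DifferentiableAt ℝ f (a + t • v) :=
    (hdiff.differentiable one_ne_zero).differentiableAt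
  have hgrad := hf.hasGradientAt
  have hFD : HasFDerivAt f (InnerProductSpace.toDual ℝ (Vec n) (gradient f (a + t • v)))
      (a + t • v) := hgrad.hasFDerivAt
  have hline : HasDerivAt (fun s : ℝ => a + s • v) v t := by
    simpa using ((hasDerivAt_id t).smul_const v).const_add a
  have := hFD.comp_hasDerivAt t hline
  simpa [InnerProductSpace.toDual_apply_apply, Function.comp_def] using this

/-- Convexity gradient inequality. -/
lemma eirl_convex_grad {n : ℕ} (f : Vec n → ℝ) (hconv : ConvexOn ℝ Set.univ f)
    (hdiff : ContDiff ℝ 1 f) (a b : Vec n) :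
    f a + ⟪gradient f a, b - a⟫_ℝ ≤ f b := by
  set φ : ℝ → ℝ := fun s => f (a + s • (b - a)) with hφ
  have hφconv : ConvexOn ℝ Set.univ φ := by
    have := hconv.comp_affineMap (AffineMap.lineMap a b : ℝ →ᵃ[ℝ] Vec n)
    have heq : φ = f ∘ (AffineMap.lineMap a b : ℝ →ᵃ[ℝ] Vec n) := by
      funext s
      simp [hφ, AffineMap.lineMap_apply, add_comm]
    rw [heq]
    simpa using this
  have hder : HasDerivAt φ ⟪gradient f a, b - a⟫_ℝ 0 := by
    have := eirl_line_deriv f hdiff a (b - a) 0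
    simpa using this
  have hslope := hφconv.le_slope_of_hasDerivAt (Set.mem_univ (0:ℝ))
    (Set.mem_univ (1:ℝ)) one_pos hder
  have h0 : φ 0 = f a := by simp [hφ]
  have h1 : φ 1 = f b := by simp [hφ]
  rw [slope_def_field, h0, h1] at hslope
  rw [sub_zero, div_one] at hslope
  have hi : ⟪gradient f a, b - a⟫_ℝ = ∑ x, gradient f a x * (b x - a x) := by
    rw [eirl_inner]; simp only [PiLp.sub_apply]
  rw [hi]
  linarith [hslope]

/-- Descent lemma. -/
lemma eirl_descent {n : ℕ} (f : Vec n → ℝ) (hdiff : ContDiff ℝ 1 f)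
    {Lf : ℝ} (hLf : 0 ≤ Lf)
    (hlip : ∀ a b, ‖gradient f a - gradient f b‖ ≤ Lf * ‖a - b‖) (a b : Vec n) :
    f b ≤ f a + ⟪gradient f a, b - a⟫_ℝ + Lf / 2 * ‖b - a‖ ^ 2 := by
  set v : Vec n := b - a with hv
  set ψ : ℝ → ℝ := fun t => f (a + t • v) - t * ⟪gradient f a, v⟫_ℝ
    - Lf * ‖v‖ ^ 2 * t ^ 2 / 2 with hψ
  have hψder : ∀ t : ℝ, HasDerivAt ψ
      (⟪gradient f (a + t • v), v⟫_ℝ - ⟪gradient f a, v⟫_ℝ - Lf * ‖v‖ ^ 2 * t) t := by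
    intro t
    have h1 := eirl_line_deriv f hdiff a v t
    have h2 : HasDerivAt (fun s : ℝ => s * ⟪gradient f a, v⟫_ℝ) ⟪gradient f a, v⟫_ℝ t := by
      simpa using (hasDerivAt_id t).mul_const ⟪gradient f a, v⟫_ℝ
    have h3 : HasDerivAt (fun s : ℝ => Lf * ‖v‖ ^ 2 * s ^ 2 / 2) (Lf * ‖v‖ ^ 2 * t) t := by
      have : HasDerivAt (fun s : ℝ => s ^ 2) (2 * t) t := by
        simpa using (hasDerivAt_id t).fun_pow 2
      have := (this.const_mul (Lf * ‖v‖ ^ 2)).div_const 2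
      refine this.congr_deriv ?_
      ring
    exact (h1.sub h2).sub h3
  have hψdiff : Differentiable ℝ ψ := fun t => (hψder t).differentiableAt
  have hanti : AntitoneOn ψ (Set.Icc 0 1) := by
    apply antitoneOn_of_deriv_nonpos (convex_Icc 0 1)
    · exact hψdiff.continuous.continuousOn
    · exact hψdiff.differentiableOn
    · intro z hz
      rw [interior_Icc] at hz
      rw [(hψder z).deriv]
      have hz0 : 0 < z := hz.1
      have hin : ⟪gradient f (a + z • v) - gradient f a, v⟫_ℝ
          ≤ ‖gradient f (a + z • v) - gradient f a‖ * ‖v‖ := real_inner_le_norm _ _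
      have hlipz : ‖gradient f (a + z • v) - gradient f a‖ ≤ Lf * (z * ‖v‖) := by
        have := hlip (a + z • v) a
        simpa [norm_smul, abs_of_pos hz0] using this
      have hnn : (0:ℝ) ≤ ‖v‖ := norm_nonneg v
      have := mul_le_mul_of_nonneg_right hlipz hnn
      rw [inner_sub_left] at hin
      nlinarith [hin, this]
  have h01 : ψ 1 ≤ ψ 0 := hanti (Set.mem_Icc.mpr ⟨le_refl 0, zero_le_one⟩)
    (Set.mem_Icc.mpr ⟨zero_le_one, le_refl 1⟩) zero_le_one
  have hψ0 : ψ 0 = f a := by simp [hψ]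
  have hψ1 : ψ 1 = f b - ⟪gradient f a, v⟫_ℝ - Lf * ‖v‖ ^ 2 / 2 := by
    simp [hψ, hv]
  rw [hψ0, hψ1] at h01
  rw [hv] at *
  linarith [h01]

lemma eirl_concave_pow {p A B : ℝ} (hp0 : 0 < p) (hp1 : p < 1) (hA : 0 ≤ A) (hB : 0 < B) :
    A ^ p ≤ B ^ p + p * B ^ (p - 1) * (A - B) := by
  have hs : (-1 : ℝ) ≤ A / B - 1 := by
    have : 0 ≤ A / B := div_nonneg hA hB.le
    linarith
  have h := rpow_one_add_le_one_add_mul_self hs hp0.le hp1.le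
  have h1 : (1 + (A / B - 1)) = A / B := by ring
  rw [h1] at h
  have hdiv : (A / B) ^ p = A ^ p / B ^ p := Real.div_rpow hA hB.le p
  rw [hdiv] at h
  have hBp : 0 < B ^ p := Real.rpow_pos_of_pos hB p
  have h2 : A ^ p ≤ B ^ p * (1 + p * (A / B - 1)) := by
    rw [← div_le_iff₀' hBp]
    calc A ^ p / B ^ p = A ^ p / B ^ p := rfl
    _ ≤ _ := h
  have hB1 : B ^ (p - 1) = B ^ p / B := by
    rw [Real.rpow_sub hB, Real.rpow_one]
  rw [hB1]
  have h3 : B ^ p * (1 + p * (A / B - 1)) = B ^ p + p * (B ^ p / B) * (A - B) := by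
    field_simp
  linarith [h2, h3.symm.le]



lemma eirl_sub_eq_sum (n : ℕ) (p lam β : ℝ) (f : Vec n → ℝ) (xk yk : Vec n)
    (εk : Fin n → ℝ) (z : Vec n) :
    subObj n p lam β f xk yk εk z =
      ∑ i, (gradient f yk i * z i + β / 2 * (z i - yk i) ^ 2
        + lam * ((p * (|xk i| + εk i) ^ (p - 1)) * |z i|)) := by
  rw [subObj, eirl_inner, eirl_sq_norm, Finset.mul_sum, Finset.mul_sum,
    ← Finset.sum_add_distrib, ← Finset.sum_add_distrib]
  exact Finset.sum_congr rfl fun i _ => by simp [PiLp.sub_apply]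

lemma eirl_coord_min (n : ℕ) (p lam β : ℝ) (f : Vec n → ℝ) (xk yk x' : Vec n)
    (εk : Fin n → ℝ)
    (hmin : ∀ z, z ≠ x' → subObj n p lam β f xk yk εk x' < subObj n p lam β f xk yk εk z)
    (i : Fin n) (t : ℝ) :
    gradient f yk i * (x' i) + β / 2 * (x' i - yk i) ^ 2
        + lam * (p * (|xk i| + εk i) ^ (p - 1)) * |x' i| ≤
      gradient f yk i * t + β / 2 * (t - yk i) ^ 2
        + lam * (p * (|xk i| + εk i) ^ (p - 1)) * |t| := by
  rcases eq_or_ne t (x' i) with rfl | ht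
  · exact le_rfl
  · set z : Vec n := WithLp.toLp 2 (Function.update x' i t) with hz
    have hzi : z i = t := Function.update_self i t x'
    have hzne : z ≠ x' := by
      intro h
      exact ht (by rw [← h, hzi])
    have hle := (hmin z hzne).le
    rw [eirl_sub_eq_sum, eirl_sub_eq_sum] at hle
    set q : Fin n → ℝ → ℝ := fun j s => gradient f yk j * s + β / 2 * (s - yk j) ^ 2
      + lam * ((p * (|xk j| + εk j) ^ (p - 1)) * |s|) with hq
    have h1 : ∑ j, q j (z j) = q i t + ∑ j ∈ Finset.univ.erase i, q j (x' j) := by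
      rw [← Finset.add_sum_erase _ _ (Finset.mem_univ i), hzi]
      congr 1
      refine Finset.sum_congr rfl fun j hj => ?_
      have hzj : z j = x' j := by
        rw [hz]; exact Function.update_of_ne (Finset.ne_of_mem_erase hj) t x'
      rw [hzj]
    have h2 : ∑ j, q j (x' j) = q i (x' i) + ∑ j ∈ Finset.univ.erase i, q j (x' j) := by
      rw [← Finset.add_sum_erase _ _ (Finset.mem_univ i)]
    have : q i (x' i) ≤ q i t := by
      rw [h1, h2] at hle
      linarith
    simpa [hq, mul_assoc] using this
lemma eirl_eps_pos {n : ℕ} {p lam β Lf μ αbar : ℝ} {f : Vec n → ℝ}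
    {x y : ℕ → Vec n} {ε : ℕ → Fin n → ℝ} {α : ℕ → ℝ}
    (H : EIRL1 n p lam β Lf μ αbar f x y ε α) : ∀ k i, 0 < ε k i := by
  intro k i
  cases k with
  | zero => exact H.hε0 i
  | succ m => exact H.hεpos m i

lemma eirl_onedim_pkg {n : ℕ} {p lam β Lf μ αbar : ℝ} {f : Vec n → ℝ}
    {x y : ℕ → Vec n} {ε : ℕ → Fin n → ℝ} {α : ℕ → ℝ}
    (H : EIRL1 n p lam β Lf μ αbar f x y ε α) (k : ℕ) (i : Fin n) :
    (∀ t, gradient f (y k) i * (x (k+1) i) + β / 2 * (x (k+1) i - y k i) ^ 2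
      + lam * (p * (|x k i| + ε k i) ^ (p - 1)) * |x (k+1) i|
      + β / 2 * (t - x (k+1) i) ^ 2 ≤
      gradient f (y k) i * t + β / 2 * (t - y k i) ^ 2
      + lam * (p * (|x k i| + ε k i) ^ (p - 1)) * |t|) ∧
    (x (k+1) i ≠ 0 →
      lam * (p * (|x k i| + ε k i) ^ (p - 1))
        = |gradient f (y k) i + β * (x (k+1) i - y k i)|) := by
  have hβ0 : 0 < β := H.hLf.trans_lt H.hβ
  have hc : 0 ≤ lam * (p * (|x k i| + ε k i) ^ (p - 1)) := by
    have h1 : 0 < (|x k i| + ε k i) := by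
      have := eirl_eps_pos H k i
      positivity
    have h2 := Real.rpow_pos_of_pos h1 (p - 1)
    exact mul_nonneg H.hlam.le (mul_nonneg H.hp0.le h2.le)
  have hq := fun t => eirl_coord_min n p lam β f (x k) (y k) (x (k+1)) (ε k)
    (H.hmin k) i t
  exact eirl_onedim hβ0 hc hq

lemma eirl_step {n : ℕ} {p lam β Lf μ αbar : ℝ} {f : Vec n → ℝ}
    {x y : ℕ → Vec n} {ε : ℕ → Fin n → ℝ} {α : ℕ → ℝ}
    (H : EIRL1 n p lam β Lf μ αbar f x y ε α) (k : ℕ) :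
    Fobj n p lam f (x (k+1)) (ε (k+1)) + β / 2 * ‖x (k+1) - x k‖ ^ 2
      ≤ Fobj n p lam f (x k) (ε k) + β / 2 * (αbar ^ 2 * ‖x k - x (k-1)‖ ^ 2) := by
  have hβ0 : 0 < β := H.hLf.trans_lt H.hβ
  have hεk := eirl_eps_pos H
  -- (1) strong subproblem inequality
  have hsum1 : subObj n p lam β f (x k) (y k) (ε k) (x (k+1))
      + β / 2 * ‖x k - x (k+1)‖ ^ 2 ≤ subObj n p lam β f (x k) (y k) (ε k) (x k) := by
    rw [eirl_sub_eq_sum, eirl_sub_eq_sum, eirl_sq_norm, Finset.mul_sum,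
      ← Finset.sum_add_distrib]
    apply Finset.sum_le_sum
    intro i _
    have h := (eirl_onedim_pkg H k i).1 (x k i)
    have hsub : (x k - x (k+1)) i = x k i - x (k+1) i := by
      simp [PiLp.sub_apply]
    rw [hsub]
    simp only [← mul_assoc]
    linarith [h]
  simp only [subObj] at hsum1
  -- (2) descent and convexity
  have hdes := eirl_descent f H.hdiff H.hLf H.hlip (y k) (x (k+1))
  have hcvx := eirl_convex_grad f H.hconv H.hdiff (y k) (x k)
  rw [inner_sub_right] at hdes
  rw [inner_sub_right] at hcvx
  -- (3) rpow concavity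
  have h5 : ∑ i, (|x (k+1) i| + ε (k+1) i) ^ p ≤
      ∑ i, ((|x k i| + ε k i) ^ p
        + (p * (|x k i| + ε k i) ^ (p - 1) * |x (k+1) i|
          - p * (|x k i| + ε k i) ^ (p - 1) * |x k i|)) := by
    apply Finset.sum_le_sum
    intro i _
    have hmono : (|x (k+1) i| + ε (k+1) i) ^ p ≤ (|x (k+1) i| + ε k i) ^ p := by
      apply Real.rpow_le_rpow (add_nonneg (abs_nonneg _) (hεk (k+1) i).le) _ H.hp0.le
      have h1 := H.hεdec k i
      have h2 := (hεk k i)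
      nlinarith [H.hμ1.le, abs_nonneg (x (k+1) i)]
    have h2 := eirl_concave_pow (A := |x (k+1) i| + ε k i) (B := |x k i| + ε k i)
      H.hp0 H.hp1 (add_nonneg (abs_nonneg _) (hεk k i).le)
      (add_pos_of_nonneg_of_pos (abs_nonneg _) (hεk k i))
    have h3 : p * (|x k i| + ε k i) ^ (p - 1) *
        ((|x (k+1) i| + ε k i) - (|x k i| + ε k i))
        = p * (|x k i| + ε k i) ^ (p - 1) * |x (k+1) i|
          - p * (|x k i| + ε k i) ^ (p - 1) * |x k i| := by ring
    linarith [h2, h3.le, h3.ge]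
  rw [Finset.sum_add_distrib, Finset.sum_sub_distrib] at h5
  have hlamT := mul_le_mul_of_nonneg_left h5 H.hlam.le
  -- (4) inertial term
  have hxynorm : ‖x k - y k‖ = α k * ‖x k - x (k - 1)‖ := by
    rw [H.hy k]
    have h1 : x k - (x k + α k • (x k - x (k - 1))) = -(α k • (x k - x (k - 1))) := by
      abel
    rw [h1, norm_neg, norm_smul, Real.norm_eq_abs, abs_of_nonneg (H.hα0 k)]
  have hN2 : β / 2 * ‖x k - y k‖ ^ 2 ≤ β / 2 * (αbar ^ 2 * ‖x k - x (k - 1)‖ ^ 2) := by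
    apply mul_le_mul_of_nonneg_left _ (by linarith : (0:ℝ) ≤ β / 2)
    rw [hxynorm, mul_pow]
    apply mul_le_mul_of_nonneg_right _ (sq_nonneg _)
    exact pow_le_pow_left₀ (H.hα0 k) (H.hα1 k) 2
  have hLfβ : Lf / 2 * ‖x (k+1) - y k‖ ^ 2 ≤ β / 2 * ‖x (k+1) - y k‖ ^ 2 := by
    apply mul_le_mul_of_nonneg_right _ (sq_nonneg _)
    linarith [H.hβ]
  have hnrev : ‖x k - x (k+1)‖ = ‖x (k+1) - x k‖ := norm_sub_rev _ _
  rw [hnrev] at hsum1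
  simp only [Fobj]
  have hmul : lam * (∑ i, (|x k i| + ε k i) ^ p
      + (∑ i, p * (|x k i| + ε k i) ^ (p - 1) * |x (k+1) i|
        - ∑ i, p * (|x k i| + ε k i) ^ (p - 1) * |x k i|))
      = lam * ∑ i, (|x k i| + ε k i) ^ p
        + (lam * ∑ i, p * (|x k i| + ε k i) ^ (p - 1) * |x (k+1) i|
          - lam * ∑ i, p * (|x k i| + ε k i) ^ (p - 1) * |x k i|) := by ring
  rw [hmul] at hlamT
  linarith [hsum1, hdes, hcvx, hlamT, hN2, hLfβ]

theorem stmt_10 (n : ℕ) (p lam β Lf μ αbar : ℝ) (f : Vec n → ℝ)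
    (x y : ℕ → Vec n) (ε : ℕ → Fin n → ℝ) (α : ℕ → ℝ)
    (H : EIRL1 n p lam β Lf μ αbar f x y ε α) :
    ∃ (K : ℕ) (s : Fin n → ℝ),
      (∀ i, s i = -1 ∨ s i = 0 ∨ s i = 1) ∧
      ∀ k > K, ∀ i, Real.sign (x k i) = s i := by
  have hβ0 : 0 < β := H.hLf.trans_lt H.hβ
  have hεk := eirl_eps_pos H
  set Hh : ℕ → ℝ := fun k =>
    Fobj n p lam f (x k) (ε k) + β * αbar / 2 * ‖x k - x (k-1)‖ ^ 2 with hHh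
  have hδ : 0 < β * (1 - αbar) / 2 := by nlinarith [H.hαbar1]
  have hstep : ∀ k, Hh (k+1) + β * (1 - αbar) / 2 * ‖x (k+1) - x k‖ ^ 2 ≤ Hh k := by
    intro k
    have h1 := eirl_step H k
    have hE : (0:ℝ) ≤ ‖x k - x (k-1)‖ ^ 2 := sq_nonneg _
    have haa : αbar ^ 2 ≤ αbar := by nlinarith [H.hαbar0, H.hαbar1]
    simp only [hHh, Nat.add_sub_cancel]
    nlinarith [h1, mul_nonneg (mul_nonneg hβ0.le (sub_nonneg.mpr haa)) hE]
  have hHanti : Antitone Hh := antitone_nat_of_succ_le fun k => by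
    have h1 := hstep k
    have h2 : (0:ℝ) ≤ β * (1 - αbar) / 2 * ‖x (k+1) - x k‖ ^ 2 :=
      mul_nonneg hδ.le (sq_nonneg _)
    exact le_trans (le_add_of_nonneg_right h2) h1
  have hH0 : Hh 0 = Fobj n p lam f (x 0) (ε 0) := by
    simp [hHh]
  have hFnn : ∀ k, (0:ℝ) ≤ β * αbar / 2 * ‖x k - x (k-1)‖ ^ 2 := fun k =>
    mul_nonneg (div_nonneg (mul_nonneg hβ0.le H.hαbar0) two_pos.le) (sq_nonneg _)
  have hFle : ∀ k, Fobj n p lam f (x k) (ε k) ≤ Fobj n p lam f (x 0) (ε 0) := by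
    intro k
    have h2 : Hh k ≤ Hh 0 := hHanti (Nat.zero_le k)
    rw [hH0] at h2
    have h1 := hFnn k
    simp only [hHh] at h2
    linarith
  have hmem : ∀ k, x k ∈ {z : Vec n | Fobj n p lam f z 0 ≤ Fobj n p lam f (x 0) (ε 0)} := by
    intro k
    have h1 : Fobj n p lam f (x k) 0 ≤ Fobj n p lam f (x k) (ε k) := by
      simp only [Fobj]
      have h2 : ∀ i : Fin n, (|x k i| + (0:Fin n → ℝ) i) ^ p ≤ (|x k i| + ε k i) ^ p := by
        intro i
        apply Real.rpow_le_rpow (by simp [abs_nonneg]) _ H.hp0.le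
        simp [Pi.zero_apply]
        exact (hεk k i).le
      have h3 : ∑ i, (|x k i| + (0:Fin n → ℝ) i) ^ p ≤ ∑ i, (|x k i| + ε k i) ^ p :=
        Finset.sum_le_sum fun i _ => h2 i
      have h4 := mul_le_mul_of_nonneg_left h3 H.hlam.le
      linarith
    exact Set.mem_setOf.mpr (h1.trans (hFle k))
  obtain ⟨R, hR⟩ := isBounded_iff_forall_norm_le.mp H.hlevel
  have hxR : ∀ k, ‖x k‖ ≤ R := fun k => hR _ (hmem k)
  have hR0 : (0:ℝ) ≤ R := le_trans (norm_nonneg (x 0)) (hxR 0)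
  -- lower bound on Hh
  have hcomp : IsCompact (closure {z : Vec n |
      Fobj n p lam f z 0 ≤ Fobj n p lam f (x 0) (ε 0)}) := H.hlevel.isCompact_closure
  obtain ⟨z0, hz0mem, hz0min⟩ := hcomp.exists_isMinOn ⟨x 0, subset_closure (hmem 0)⟩
    (H.hdiff.continuous.continuousOn)
  have hHlow : ∀ k, f z0 ≤ Hh k := by
    intro k
    have h1 : f z0 ≤ f (x k) := (isMinOn_iff.mp hz0min) (x k) (subset_closure (hmem k))
    have h2 : (0:ℝ) ≤ lam * ∑ i, (|x k i| + ε k i) ^ p :=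
      mul_nonneg H.hlam.le (Finset.sum_nonneg fun i _ =>
        Real.rpow_nonneg (add_nonneg (abs_nonneg _) (hεk k i).le) p)
    have h3 := hFnn k
    simp only [hHh, Fobj]
    linarith
  -- Hh converges, hence successive differences tend to 0
  have hHtend : Tendsto Hh atTop (𝓝 (⨅ k, Hh k)) :=
    tendsto_atTop_ciInf hHanti ⟨f z0, by rintro v ⟨k, rfl⟩; exact hHlow k⟩
  have hdiff0 : Tendsto (fun k => Hh k - Hh (k+1)) atTop (𝓝 0) := by
    have h2 : Tendsto (fun k => Hh (k+1)) atTop (𝓝 (⨅ k, Hh k)) :=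
      hHtend.comp (tendsto_add_atTop_nat 1)
    simpa using hHtend.sub h2
  have hDnorm : Tendsto (fun k => ‖x (k+1) - x k‖) atTop (𝓝 0) := by
    have hsq : Tendsto (fun k => ‖x (k+1) - x k‖ ^ 2) atTop (𝓝 0) := by
      apply tendsto_of_tendsto_of_tendsto_of_le_of_le tendsto_const_nhds
        (by simpa using hdiff0.div_const (β * (1 - αbar) / 2))
        (fun k => sq_nonneg _) (fun k => ?_)
      rw [le_div_iff₀ hδ]
      linarith [hstep k]
    have h2 : (fun k => ‖x (k+1) - x k‖) = fun k => Real.sqrt (‖x (k+1) - x k‖ ^ 2) :=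
      funext fun k => (Real.sqrt_sq (norm_nonneg _)).symm
    rw [h2]
    have h3 := (Real.continuous_sqrt.tendsto 0).comp hsq
    rw [Real.sqrt_zero] at h3
    exact h3
  -- uniform bound on subgradient terms
  have hyR : ∀ k, ‖y k‖ ≤ 3 * R := by
    intro k
    rw [H.hy k]
    have h0 : ‖x k + α k • (x k - x (k-1))‖ ≤ ‖x k‖ + ‖α k • (x k - x (k-1))‖ :=
      norm_add_le _ _
    have h1 : ‖α k • (x k - x (k-1))‖ = α k * ‖x k - x (k-1)‖ := by
      rw [norm_smul, Real.norm_eq_abs, abs_of_nonneg (H.hα0 k)]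
    have h2 : ‖x k - x (k-1)‖ ≤ ‖x k‖ + ‖x (k-1)‖ := norm_sub_le _ _
    have h3 : α k * ‖x k - x (k-1)‖ ≤ 1 * (‖x k‖ + ‖x (k-1)‖) :=
      mul_le_mul ((H.hα1 k).trans H.hαbar1.le) h2 (norm_nonneg _) zero_le_one
    have h4 := hxR k; have h5 := hxR (k-1)
    linarith
  set C : ℝ := ‖gradient f (0 : Vec n)‖ + Lf * (3 * R) + β * (4 * R) + 1 with hC
  have hC0 : 0 < C := by
    have h1 : (0:ℝ) ≤ ‖gradient f (0 : Vec n)‖ := norm_nonneg _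
    have h2 : (0:ℝ) ≤ Lf * (3 * R) := mul_nonneg H.hLf (by linarith)
    have h3 : (0:ℝ) ≤ β * (4 * R) := mul_nonneg hβ0.le (by linarith)
    rw [hC]; linarith
  have hbound : ∀ k i, |gradient f (y k) i + β * (x (k+1) i - y k i)| ≤ C := by
    intro k i
    have h1 : |gradient f (y k) i| ≤ ‖gradient f (y k)‖ := eirl_abs_coord_le _ i
    have h2 : ‖gradient f (y k)‖ ≤ ‖gradient f (0 : Vec n)‖ + Lf * ‖y k‖ := by
      have h3 := H.hlip (y k) 0
      rw [sub_zero] at h3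
      have h4 := norm_sub_norm_le (gradient f (y k)) (gradient f (0 : Vec n))
      linarith
    have h5 : |x (k+1) i| ≤ R := (eirl_abs_coord_le _ i).trans (hxR (k+1))
    have h6 : |y k i| ≤ 3 * R := (eirl_abs_coord_le _ i).trans (hyR k)
    have h8 : |x (k+1) i - y k i| ≤ |x (k+1) i| + |y k i| := abs_sub _ _
    have h7 : |gradient f (y k) i + β * (x (k+1) i - y k i)|
        ≤ |gradient f (y k) i| + β * |x (k+1) i - y k i| := by
      have := abs_add_le (gradient f (y k) i) (β * (x (k+1) i - y k i))
      rw [abs_mul, abs_of_pos hβ0] at this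
      exact this
    have h9 : Lf * ‖y k‖ ≤ Lf * (3 * R) := mul_le_mul_of_nonneg_left (hyR k) H.hLf
    have h10 : β * |x (k+1) i - y k i| ≤ β * (4 * R) := by
      apply mul_le_mul_of_nonneg_left _ hβ0.le
      linarith
    rw [hC]
    linarith
  -- the threshold
  set cth : ℝ := (C / (lam * p)) ^ ((p-1)⁻¹) with hcth
  have hCp : 0 < C / (lam * p) := div_pos hC0 (mul_pos H.hlam H.hp0)
  have hcth0 : 0 < cth := Real.rpow_pos_of_pos hCp _
  have hthresh : ∀ k i, x (k+1) i ≠ 0 → cth ≤ |x k i| + ε k i := by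
    intro k i hne
    have hstat := (eirl_onedim_pkg H k i).2 hne
    have h1 : lam * (p * (|x k i| + ε k i) ^ (p-1)) ≤ C := by
      rw [hstat]; exact hbound k i
    by_contra hlt
    push_neg at hlt
    have hBpos : 0 < |x k i| + ε k i := add_pos_of_nonneg_of_pos (abs_nonneg _) (hεk k i)
    have h2 := Real.rpow_lt_rpow_of_neg hBpos hlt (by linarith [H.hp1] : p - 1 < 0)
    have hpne : p - 1 ≠ 0 := by linarith [H.hp1]
    have h3 : cth ^ (p-1) = C / (lam * p) := by
      rw [hcth, ← Real.rpow_mul hCp.le, inv_mul_cancel₀ hpne, Real.rpow_one]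
    have h4 : (|x k i| + ε k i) ^ (p-1) ≤ C / (lam * p) := by
      rw [le_div_iff₀ (mul_pos H.hlam H.hp0)]
      nlinarith [h1]
    rw [h3] at h2
    linarith
  -- ε tends to zero
  have hεlim : ∀ i, Tendsto (fun k => ε k i) atTop (𝓝 0) := by
    intro i
    have hgeo : ∀ k, ε k i ≤ μ ^ k * ε 0 i := by
      intro k
      induction k with
      | zero => simp
      | succ m ih =>
        calc ε (m+1) i ≤ μ * ε m i := H.hεdec m i
        _ ≤ μ * (μ ^ m * ε 0 i) := mul_le_mul_of_nonneg_left ih H.hμ0.le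
        _ = μ ^ (m+1) * ε 0 i := by ring
    apply tendsto_of_tendsto_of_tendsto_of_le_of_le tendsto_const_nhds _
      (fun k => (hεk k i).le) hgeo
    simpa using (tendsto_pow_atTop_nhds_zero_of_lt_one H.hμ0.le H.hμ1).mul_const (ε 0 i)
  -- choose the stabilization index
  have hev : ∀ᶠ k in atTop, (∀ i, ε k i < cth/4) ∧ ‖x (k+1) - x k‖ < cth/4 := by
    apply Filter.Eventually.and
    · exact Filter.eventually_all.mpr fun i =>
        (hεlim i).eventually_lt_const (by linarith)
    · exact hDnorm.eventually_lt_const (by linarith)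
  obtain ⟨K₀, hK₀⟩ := Filter.eventually_atTop.mp hev
  have hstar : ∀ k, K₀ ≤ k → ∀ i, x (k+1) i ≠ 0 →
      x k i ≠ 0 ∧ Real.sign (x (k+1) i) = Real.sign (x k i) := by
    intro k hk i hne
    obtain ⟨hεsm, hdsm⟩ := hK₀ k hk
    have h1 := hthresh k i hne
    have h2 : 3*cth/4 < |x k i| := by have := hεsm i; linarith
    have h3 : |x (k+1) i - x k i| < cth/4 := by
      have h4 : |x (k+1) i - x k i| ≤ ‖x (k+1) - x k‖ := by
        have := eirl_abs_coord_le (x (k+1) - x k) i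
        simpa [PiLp.sub_apply] using this
      linarith
    obtain ⟨h3a, h3b⟩ := abs_lt.mp h3
    rcases lt_trichotomy (x k i) 0 with hneg | hzero | hpos
    · rw [abs_of_neg hneg] at h2
      have h5 : x (k+1) i < 0 := by linarith
      exact ⟨ne_of_lt hneg, by rw [Real.sign_of_neg h5, Real.sign_of_neg hneg]⟩
    · rw [hzero, abs_zero] at h2; linarith
    · rw [abs_of_pos hpos] at h2
      have h5 : 0 < x (k+1) i := by linarith
      exact ⟨ne_of_gt hpos, by rw [Real.sign_of_pos h5, Real.sign_of_pos hpos]⟩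
  have hcoord : ∀ i : Fin n, ∃ (Ki : ℕ) (si : ℝ), (si = -1 ∨ si = 0 ∨ si = 1) ∧
      ∀ k, Ki < k → Real.sign (x k i) = si := by
    intro i
    by_cases hall : ∀ k, K₀ < k → x k i ≠ 0
    · refine ⟨K₀, Real.sign (x (K₀+1) i), Real.sign_apply_eq _, ?_⟩
      have hind : ∀ k, K₀ + 1 ≤ k → Real.sign (x k i) = Real.sign (x (K₀+1) i) := by
        intro k hk
        induction k, hk using Nat.le_induction with
        | base => rfl
        | succ m hm ih =>
          have h1 := (hstar m (by omega) i (hall (m+1) (by omega))).2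
          rw [h1, ih]
      exact fun k hk => hind k hk
    · push_neg at hall
      obtain ⟨k0, hk0gt, hk0z⟩ := hall
      refine ⟨k0, 0, Or.inr (Or.inl rfl), ?_⟩
      have hzero : ∀ k, k0 ≤ k → x k i = 0 := by
        intro k hk
        induction k, hk using Nat.le_induction with
        | base => exact hk0z
        | succ m hm ih =>
          by_contra hne
          exact (hstar m (by omega) i hne).1 ih
      intro k hk
      rw [hzero k hk.le, Real.sign_zero]
  choose Ki si hsi hsign using hcoord
  refine ⟨Finset.univ.sup Ki, si, hsi, ?_⟩
  intro k hk i
  exact hsign i k (lt_of_le_of_lt (Finset.le_sup (Finset.mem_univ i)) hk)
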